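/- Let B be a C*-algebra, Φ : B ⊗ B → B a *-homomorphism, and V a unitary (in the multiplier algebra of B, or in B(H) for a faithful nondegenerate representation of B) satisfying V Φ(Φ(b₁ ⊗ b₂) ⊗ b₃) V* = Φ(b₁ ⊗ Φ(b₂ ⊗ b₃)) for all b₁, b₂, b₃ ∈ B. Then for right Hilbert B-modules M₁, M₂, M₃, the formula α(((ξ₁⊠ξ₂)⊗c ⊠ ξ₃)⊗e) = (ξ₁ ⊠ ((ξ₂⊠ξ₃)⊗1)) ⊗ VΦ(c⊗1)e extends (via the appropriate balancing relations) to a well-defined B-linear isometry (M₁⊗M₂)⊗M₃ → M₁⊗(M₂⊗M₃), where M⊗N := (M⊠N)⊗_Φ B. -/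

import Mathlib

open scoped InnerProductSpace RightActions


/-- The Hilbert C⋆-module class as it stood in Mathlib of December 2024 (right `A`-module via
`SMul Aᵐᵒᵖ E`, inner product `A`-linear on the right). -/
class CStarModuleRight (A E : Type*) [NonUnitalSemiring A] [StarRing A] [Module ℂ A]
    [AddCommGroup E] [Module ℂ E] [PartialOrder A] [SMul Aᵐᵒᵖ E] [Norm A] [Norm E]
    extends Inner A E where
  inner_add_right {x} {y} {z} : inner x (y + z) = inner x y + inner x z
  inner_self_nonneg {x} : 0 ≤ inner x x
  inner_self {x} : inner x x = 0 ↔ x = 0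
  inner_op_smul_right {a : A} {x y : E} : inner x (y <• a) = inner x y * a
  inner_smul_right_complex {z : ℂ} {x} {y} : inner x (z • y) = z • inner x y
  star_inner x y : star (inner x y) = inner y x
  norm_eq_sqrt_norm_inner_self x : ‖x‖ = Real.sqrt ‖inner x x‖

namespace CStarModuleRight

variable {B : Type*} [CStarAlgebra B] [PartialOrder B] [StarOrderedRing B]
variable {E : Type*} [NormedAddCommGroup E] [Module ℂ E] [SMul Bᵐᵒᵖ E] [CStarModuleRight B E]

attribute [simp] CStarModuleRight.inner_add_right CStarModuleRight.inner_op_smul_right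
attribute [simp] CStarModuleRight.inner_smul_right_complex CStarModuleRight.star_inner

@[simp] lemma inner_add_left {x y z : E} : ⟪x + y, z⟫_B = ⟪x, z⟫_B + ⟪y, z⟫_B := by
  rw [← star_inner z (x + y), inner_add_right, star_add, star_inner, star_inner]

@[simp] lemma inner_op_smul_left {a : B} {x y : E} : ⟪x <• a, y⟫_B = star a * ⟪x, y⟫_B := by
  rw [← star_inner y, inner_op_smul_right, star_mul, star_inner]

@[simp] lemma inner_smul_left_complex {z : ℂ} {x y : E} : ⟪z • x, y⟫_B = star z • ⟪x, y⟫_B := by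
  rw [← star_inner y, inner_smul_right_complex, star_smul, star_inner]

lemma inner_smul_right_real {z : ℝ} {x y : E} : ⟪x, z • y⟫_B = z • ⟪x, y⟫_B := by
  have h₁ : z • y = (z : ℂ) • y := by simp
  rw [h₁, inner_smul_right_complex]
  simp

lemma inner_smul_left_real {z : ℝ} {x y : E} : ⟪z • x, y⟫_B = z • ⟪x, y⟫_B := by
  have h₁ : z • x = (z : ℂ) • x := by simp
  rw [h₁, inner_smul_left_complex]
  simp

@[simp] lemma inner_zero_right {x : E} : ⟪x, 0⟫_B = 0 := by
  simpa using inner_smul_right_complex (A := B) (z := 0) (x := x) (y := (0 : E))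

@[simp] lemma inner_zero_left {x : E} : ⟪0, x⟫_B = 0 := by
  rw [← star_inner x 0, inner_zero_right, star_zero]

@[simp] lemma inner_neg_right {x y : E} : ⟪x, -y⟫_B = -⟪x, y⟫_B := by
  rw [← neg_one_smul ℂ y, inner_smul_right_complex, neg_one_smul]

@[simp] lemma inner_neg_left {x y : E} : ⟪-x, y⟫_B = -⟪x, y⟫_B := by
  rw [← star_inner y (-x), inner_neg_right, star_neg, star_inner]

@[simp] lemma inner_sub_right {x y z : E} : ⟪x, y - z⟫_B = ⟪x, y⟫_B - ⟪x, z⟫_B := by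
  rw [sub_eq_add_neg, inner_add_right, inner_neg_right, ← sub_eq_add_neg]

@[simp] lemma inner_sub_left {x y z : E} : ⟪x - y, z⟫_B = ⟪x, z⟫_B - ⟪y, z⟫_B := by
  rw [sub_eq_add_neg, inner_add_left, inner_neg_left, ← sub_eq_add_neg]

lemma inner_mul_inner_swap_le {x y : E} : ⟪y, x⟫_B * ⟪x, y⟫_B ≤ ‖x‖ ^ 2 • ⟪y, y⟫_B := by
  rcases eq_or_ne x 0 with h | h
  · simp [h]
  · have h₁ : ∀ a : B, (0 : B) ≤ ‖x‖ ^ 2 • (star a * a) - ‖x‖ ^ 2 • (star a * ⟪x, y⟫_B)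
        - ‖x‖ ^ 2 • (⟪y, x⟫_B * a) + ‖x‖ ^ 2 • (‖x‖ ^ 2 • ⟪y, y⟫_B) := fun a => by
      calc (0 : B) ≤ ⟪x <• a - ‖x‖ ^ 2 • y, x <• a - ‖x‖ ^ 2 • y⟫_B := inner_self_nonneg
        _ = star a * ⟪x, x⟫_B * a - ‖x‖ ^ 2 • (star a * ⟪x, y⟫_B)
              - ‖x‖ ^ 2 • (⟪y, x⟫_B * a) + ‖x‖ ^ 2 • (‖x‖ ^ 2 • ⟪y, y⟫_B) := by
            simp only [inner_sub_right, inner_op_smul_right, inner_sub_left, inner_op_smul_left,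
              inner_smul_left_real, inner_smul_right_real, mul_sub, sub_mul, smul_sub, mul_assoc,
              mul_smul_comm, smul_mul_assoc]
            abel
        _ ≤ ‖x‖ ^ 2 • (star a * a) - ‖x‖ ^ 2 • (star a * ⟪x, y⟫_B)
              - ‖x‖ ^ 2 • (⟪y, x⟫_B * a) + ‖x‖ ^ 2 • (‖x‖ ^ 2 • ⟪y, y⟫_B) := by
            gcongr
            calc star a * ⟪x, x⟫_B * a ≤ ‖⟪x, x⟫_B‖ • (star a * a) :=
                  CStarAlgebra.star_left_conjugate_le_norm_smul (hb := star_inner x x)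
              _ = (√‖⟪x, x⟫_B‖) ^ 2 • (star a * a) := by
                  rw [Real.sq_sqrt]
                  positivity
              _ = ‖x‖ ^ 2 • (star a * a) := by rw [← norm_eq_sqrt_norm_inner_self (A := B) x]
    specialize h₁ ⟪x, y⟫_B
    simp only [star_inner, sub_self, zero_sub, le_neg_add_iff_add_le, add_zero] at h₁
    rwa [smul_le_smul_iff_of_pos_left (pow_pos (norm_pos_iff.mpr h) _)] at h₁

lemma norm_inner_le {x y : E} : ‖⟪x, y⟫_B‖ ≤ ‖x‖ * ‖y‖ := by
  have := calc ‖⟪x, y⟫_B‖ ^ 2 = ‖⟪y, x⟫_B * ⟪x, y⟫_B‖ := by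
                rw [← star_inner x y, CStarRing.norm_star_mul_self, pow_two]
    _ ≤ ‖‖x‖ ^ 2 • ⟪y, y⟫_B‖ := by
                refine CStarAlgebra.norm_le_norm_of_nonneg_of_le ?_ inner_mul_inner_swap_le
                rw [← star_inner x y]
                exact star_mul_self_nonneg ⟪x, y⟫_B
    _ = ‖x‖ ^ 2 * ‖⟪y, y⟫_B‖ := by simp [norm_smul]
    _ = ‖x‖ ^ 2 * ‖y‖ ^ 2 := by
                simp only [norm_eq_sqrt_norm_inner_self (A := B) y, norm_nonneg, Real.sq_sqrt]
    _ = (‖x‖ * ‖y‖) ^ 2 := by simp only [mul_pow]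
  refine (pow_le_pow_iff_left₀ (norm_nonneg ⟪x, y⟫_B) ?_ (by simp)).mp this
  exact mul_nonneg (norm_nonneg _) (norm_nonneg _)

lemma normedSpaceCore (B : Type*) [CStarAlgebra B] [PartialOrder B] [StarOrderedRing B]
    {E : Type*} [NormedAddCommGroup E] [Module ℂ E] [SMul Bᵐᵒᵖ E] [CStarModuleRight B E] : NormedSpace.Core ℂ E where
  norm_nonneg _ := norm_nonneg _
  norm_eq_zero_iff _ := norm_eq_zero
  norm_smul c x := by simp [norm_eq_sqrt_norm_inner_self (A := B), norm_smul, ← mul_assoc]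
  norm_triangle x y := norm_add_le x y

noncomputable def innerₛₗ : E →ₗ⋆[ℂ] E →ₗ[ℂ] B where
  toFun x := { toFun := fun y => ⟪x, y⟫_B
               map_add' := fun z y => by simp
               map_smul' := fun z y => by simp }
  map_add' z y := by ext; simp
  map_smul' z y := by ext; simp

lemma innerₛₗ_apply {x y : E} : innerₛₗ x y = ⟪x, y⟫_B := rfl


lemma continuous_inner : Continuous (fun x : E × E => ⟪x.1, x.2⟫_B) := by
  letI : NormedSpace ℂ E := .ofCore (normedSpaceCore B)
  let L : E →L⋆[ℂ] E →L[ℂ] B := LinearMap.mkContinuous₂ (innerₛₗ (B := B) (E := E)) 1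
    fun x y => by simp [innerₛₗ_apply, norm_inner_le]
  have hL : ∀ x y : E, L x y = ⟪x, y⟫_B := fun x y => rfl
  simp_rw [← hL]
  fun_prop

end CStarModuleRight

namespace Stmt11Aux

variable {B : Type*} [CStarAlgebra B] [PartialOrder B] [StarOrderedRing B]
variable {E : Type*} [NormedAddCommGroup E] [Module ℂ E] [SMul Bᵐᵒᵖ E] [CStarModuleRight B E]

lemma ext_inner {x y : E} (h : ∀ w : E, ⟪w, x⟫_B = ⟪w, y⟫_B) : x = y := by
  have h0 : ⟪x - y, x - y⟫_B = 0 := by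
    rw [CStarModuleRight.inner_sub_right, h (x - y), sub_self]
  exact sub_eq_zero.mp (CStarModuleRight.inner_self.mp h0)

lemma op_smul_add (x y : E) (b : B) : (x + y) <• b = x <• b + y <• b :=
  ext_inner (B := B) fun w => by simp [add_mul]

lemma op_smul_csmul (k : ℂ) (x : E) (b : B) : (k • x) <• b = k • (x <• b) :=
  ext_inner (B := B) fun w => by simp [smul_mul_assoc]

lemma op_smul_zero (b : B) : (0 : E) <• b = 0 :=
  ext_inner (B := B) fun w => by simp

lemma norm_op_smul_le (x : E) (b : B) : ‖x <• b‖ ≤ ‖b‖ * ‖x‖ := by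
  have h1 : ⟪x <• b, x <• b⟫_B = star b * ⟪x, x⟫_B * b := by simp [mul_assoc]
  have h2 : ‖star b * ⟪x, x⟫_B * b‖ ≤ ‖b‖ * ‖⟪x, x⟫_B‖ * ‖b‖ := by
    calc ‖star b * ⟪x, x⟫_B * b‖ ≤ ‖star b * ⟪x, x⟫_B‖ * ‖b‖ := norm_mul_le _ _
      _ ≤ ‖star b‖ * ‖⟪x, x⟫_B‖ * ‖b‖ := by
          gcongr; exact norm_mul_le _ _
      _ = ‖b‖ * ‖⟪x, x⟫_B‖ * ‖b‖ := by rw [norm_star]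
  rw [CStarModuleRight.norm_eq_sqrt_norm_inner_self (A := B) x, CStarModuleRight.norm_eq_sqrt_norm_inner_self (A := B) (x <• b), h1]
  calc √‖star b * ⟪x, x⟫_B * b‖ ≤ √(‖b‖ * ‖⟪x, x⟫_B‖ * ‖b‖) := Real.sqrt_le_sqrt h2
    _ = √(‖b‖ ^ 2 * ‖⟪x, x⟫_B‖) := by ring_nf
    _ = ‖b‖ * √‖⟪x, x⟫_B‖ := by
        rw [Real.sqrt_mul (sq_nonneg _), Real.sqrt_sq (norm_nonneg _)]

noncomputable def opSMulCLM [NormedSpace ℂ E] (b : B) : E →L[ℂ] E :=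
  LinearMap.mkContinuous
    { toFun := fun x => x <• b
      map_add' := fun x y => op_smul_add x y b
      map_smul' := fun k x => op_smul_csmul k x b } ‖b‖
    (fun x => norm_op_smul_le x b)

@[simp] lemma opSMulCLM_apply [NormedSpace ℂ E] (b : B) (x : E) : opSMulCLM b x = x <• b := rfl

end Stmt11Aux

/-- Let `B` be a (unital) C*-algebra (so that `B` coincides with its
multiplier algebra), `Φ : B ⊗ B → B` a *-homomorphism on the minimal tensor product (encoded
on elementary tensors), and `V` a unitary satisfying
`V Φ(Φ(b₁ ⊗ b₂) ⊗ b₃) V* = Φ(b₁ ⊗ Φ(b₂ ⊗ b₃))` for all `b₁, b₂, b₃ ∈ B`.  Then for right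
Hilbert `B`-modules `M₁, M₂, M₃` the formula
`α(((ξ₁ ⊠ ξ₂) ⊗ c ⊠ ξ₃) ⊗ e) = (ξ₁ ⊠ ((ξ₂ ⊠ ξ₃) ⊗ 1)) ⊗ V Φ(c ⊗ 1) e`
extends to a well-defined `B`-linear isometry `(M₁ ⊗ M₂) ⊗ M₃ → M₁ ⊗ (M₂ ⊗ M₃)`, where
`M ⊗ N := (M ⊠ N) ⊗_Φ B` (all tensor products encoded by simple tensor maps with the
defining inner-product formulas and dense spans). -/
theorem stmt11 {B : Type*} [CStarAlgebra B] [PartialOrder B] [StarOrderedRing B]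
    (Φ : B → B → B)
    (hΦadd₁ : ∀ a a' b, Φ (a + a') b = Φ a b + Φ a' b)
    (hΦadd₂ : ∀ a b b', Φ a (b + b') = Φ a b + Φ a b')
    (hΦsmul : ∀ (c : ℂ) a b, Φ (c • a) b = c • Φ a b)
    (hΦmul : ∀ a a' b b', Φ (a * a') (b * b') = Φ a b * Φ a' b')
    (hΦstar : ∀ a b, Φ (star a) (star b) = star (Φ a b))
    (V : B) (hV : V ∈ unitary B)
    (hVΦ : ∀ b₁ b₂ b₃ : B, V * Φ (Φ b₁ b₂) b₃ * star V = Φ b₁ (Φ b₂ b₃))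
    {M₁ : Type*} [NormedAddCommGroup M₁] [Module ℂ M₁] [SMul Bᵐᵒᵖ M₁] [CStarModuleRight B M₁]
    [CompleteSpace M₁]
    {M₂ : Type*} [NormedAddCommGroup M₂] [Module ℂ M₂] [SMul Bᵐᵒᵖ M₂] [CStarModuleRight B M₂]
    [CompleteSpace M₂]
    {M₃ : Type*} [NormedAddCommGroup M₃] [Module ℂ M₃] [SMul Bᵐᵒᵖ M₃] [CStarModuleRight B M₃]
    [CompleteSpace M₃]
    -- `T₁₂ = M₁ ⊗ M₂`
    {T₁₂ : Type*} [NormedAddCommGroup T₁₂] [Module ℂ T₁₂] [SMul Bᵐᵒᵖ T₁₂] [CStarModuleRight B T₁₂]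
    [CompleteSpace T₁₂]
    (ι₁₂ : M₁ → M₂ → B → T₁₂)
    (hι₁₂_inner : ∀ (x : M₁) (y : M₂) (a : B) (x' : M₁) (y' : M₂) (a' : B),
      ⟪ι₁₂ x y a, ι₁₂ x' y' a'⟫_B = star a * Φ ⟪x, x'⟫_B ⟪y, y'⟫_B * a')
    (hι₁₂_smul : ∀ (x : M₁) (y : M₂) (a b : B), (ι₁₂ x y a) <• b = ι₁₂ x y (a * b))
    (hι₁₂_dense : Dense (↑(Submodule.span ℂ
      (Set.range fun t : M₁ × M₂ × B => ι₁₂ t.1 t.2.1 t.2.2)) : Set T₁₂))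
    -- `T₂₃ = M₂ ⊗ M₃`
    {T₂₃ : Type*} [NormedAddCommGroup T₂₃] [Module ℂ T₂₃] [SMul Bᵐᵒᵖ T₂₃] [CStarModuleRight B T₂₃]
    [CompleteSpace T₂₃]
    (ι₂₃ : M₂ → M₃ → B → T₂₃)
    (hι₂₃_inner : ∀ (y : M₂) (z : M₃) (a : B) (y' : M₂) (z' : M₃) (a' : B),
      ⟪ι₂₃ y z a, ι₂₃ y' z' a'⟫_B = star a * Φ ⟪y, y'⟫_B ⟪z, z'⟫_B * a')
    (hι₂₃_smul : ∀ (y : M₂) (z : M₃) (a b : B), (ι₂₃ y z a) <• b = ι₂₃ y z (a * b))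
    (hι₂₃_dense : Dense (↑(Submodule.span ℂ
      (Set.range fun t : M₂ × M₃ × B => ι₂₃ t.1 t.2.1 t.2.2)) : Set T₂₃))
    -- `TL = (M₁ ⊗ M₂) ⊗ M₃`
    {TL : Type*} [NormedAddCommGroup TL] [Module ℂ TL] [SMul Bᵐᵒᵖ TL] [CStarModuleRight B TL]
    [CompleteSpace TL]
    (ιL : T₁₂ → M₃ → B → TL)
    (hιL_inner : ∀ (x : T₁₂) (z : M₃) (e : B) (x' : T₁₂) (z' : M₃) (e' : B),
      ⟪ιL x z e, ιL x' z' e'⟫_B = star e * Φ ⟪x, x'⟫_B ⟪z, z'⟫_B * e')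
    (hιL_smul : ∀ (x : T₁₂) (z : M₃) (e b : B), (ιL x z e) <• b = ιL x z (e * b))
    (hιL_dense : Dense (↑(Submodule.span ℂ
      {t : TL | ∃ (x : M₁) (y : M₂) (c : B) (z : M₃) (e : B),
        t = ιL (ι₁₂ x y c) z e}) : Set TL))
    -- `TR = M₁ ⊗ (M₂ ⊗ M₃)`
    {TR : Type*} [NormedAddCommGroup TR] [Module ℂ TR] [SMul Bᵐᵒᵖ TR] [CStarModuleRight B TR]
    [CompleteSpace TR]
    (ιR : M₁ → T₂₃ → B → TR)
    (hιR_inner : ∀ (x : M₁) (w : T₂₃) (e : B) (x' : M₁) (w' : T₂₃) (e' : B),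
      ⟪ιR x w e, ιR x' w' e'⟫_B = star e * Φ ⟪x, x'⟫_B ⟪w, w'⟫_B * e')
    (hιR_smul : ∀ (x : M₁) (w : T₂₃) (e b : B), (ιR x w e) <• b = ιR x w (e * b)) :
    ∃ α : TL → TR,
      (∀ (x : M₁) (y : M₂) (z : M₃) (c e : B),
        α (ιL (ι₁₂ x y c) z e) = ιR x (ι₂₃ y z 1) (V * Φ c 1 * e)) ∧
      (∀ t t' : TL, α (t + t') = α t + α t') ∧
      (∀ (k : ℂ) (t : TL), α (k • t) = k • α t) ∧
      (∀ (t : TL) (b : B), α (t <• b) = (α t) <• b) ∧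
      (∀ t t' : TL, ⟪α t, α t'⟫_B = ⟪t, t'⟫_B) := by
  classical
  letI : NormedSpace ℂ TL := .ofCore (CStarModuleRight.normedSpaceCore (B := B))
  letI : NormedSpace ℂ TR := .ofCore (CStarModuleRight.normedSpaceCore (B := B))
  obtain ⟨hV1, hV2⟩ := Unitary.mem_iff.mp hV
  -- the index type for elementary tensors
  set G := M₁ × M₂ × B × M₃ × B with hG
  set g : G → TL := fun t => ιL (ι₁₂ t.1 t.2.1 t.2.2.1) t.2.2.2.1 t.2.2.2.2 with hg
  set h : G → TR := fun t => ιR t.1 (ι₂₃ t.2.1 t.2.2.2.1 1) (V * Φ t.2.2.1 1 * t.2.2.2.2) with hh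
  -- the key inner-product computation on elementary tensors
  have hgen : ∀ p q : G, ⟪h p, h q⟫_B = ⟪g p, g q⟫_B := by
    rintro ⟨x, y, c, z, e⟩ ⟨x', y', c', z', e'⟩
    simp only [hg, hh]
    rw [hιR_inner, hι₂₃_inner, hιL_inner, hι₁₂_inner]
    set P := ⟪x, x'⟫_B
    set Q := ⟪y, y'⟫_B
    set R := ⟪z, z'⟫_B
    have hkey : star V * Φ P (Φ Q R) * V = Φ (Φ P Q) R := by
      rw [← hVΦ P Q R]
      simp only [← mul_assoc]
      rw [hV1, one_mul, mul_assoc, hV1, mul_one]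
    have e1 := hΦmul (star c) (Φ P Q) 1 R
    rw [one_mul] at e1
    have e2 := hΦmul (star c * Φ P Q) c' R 1
    rw [mul_one] at e2
    have hstar1 : Φ (star c) 1 = star (Φ c 1) := by simpa using hΦstar c 1
    simp only [star_one, one_mul, mul_one]
    rw [e2, e1, ← hkey, hstar1]
    simp only [star_mul, mul_assoc]
  -- linear combinations
  set Lg : (G →₀ ℂ) →ₗ[ℂ] TL := Finsupp.linearCombination ℂ g with hLg
  set Lh : (G →₀ ℂ) →ₗ[ℂ] TR := Finsupp.linearCombination ℂ h with hLh
  have key2 : ∀ p q : G →₀ ℂ, ⟪Lh p, Lh q⟫_B = ⟪Lg p, Lg q⟫_B := by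
    intro p q
    induction p using Finsupp.induction_linear with
    | zero => simp
    | add f f' hf hf' => simp [CStarModuleRight.inner_add_left, hf, hf']
    | single a k =>
      induction q using Finsupp.induction_linear with
      | zero => simp
      | add f f' hf hf' => simp [hf, hf']
      | single a' k' =>
        simp only [hLg, hLh, Finsupp.linearCombination_single, CStarModuleRight.inner_smul_left_complex,
          CStarModuleRight.inner_smul_right_complex, hgen a a']
  have keynorm : ∀ p : G →₀ ℂ, ‖Lh p‖ = ‖Lg p‖ := fun p => by
    rw [CStarModuleRight.norm_eq_sqrt_norm_inner_self (A := B),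
      CStarModuleRight.norm_eq_sqrt_norm_inner_self (A := B) (Lg p), key2]
  have hker : LinearMap.ker Lg ≤ LinearMap.ker Lh := by
    intro p hp
    rw [LinearMap.mem_ker] at hp ⊢
    rw [← norm_eq_zero, keynorm, hp, norm_zero]
  set S : Submodule ℂ TL := LinearMap.range Lg with hS
  have hSspan : S = Submodule.span ℂ (Set.range g) := by
    rw [hS, hLg]; exact Finsupp.range_linearCombination ℂ
  have hsets : Set.range g =
      {t : TL | ∃ (x : M₁) (y : M₂) (c : B) (z : M₃) (e : B), t = ιL (ι₁₂ x y c) z e} := by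
    ext t
    constructor
    · rintro ⟨⟨x, y, c, z, e⟩, rfl⟩
      exact ⟨x, y, c, z, e, rfl⟩
    · rintro ⟨x, y, c, z, e, rfl⟩
      exact ⟨(x, y, c, z, e), rfl⟩
  have hSdense : Dense (S : Set TL) := by
    rw [hSspan, hsets]
    exact hιL_dense
  -- the linear map on the span
  set f0 : S →ₗ[ℂ] TR :=
    (Submodule.liftQ (LinearMap.ker Lg) Lh hker).comp Lg.quotKerEquivRange.symm.toLinearMap
    with hf0def
  have hf0 : ∀ (p : G →₀ ℂ) (hp : Lg p ∈ S), f0 ⟨Lg p, hp⟩ = Lh p := by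
    intro p hp
    have h1 : Lg.quotKerEquivRange (Submodule.Quotient.mk p) = ⟨Lg p, hp⟩ :=
      Subtype.ext (Lg.quotKerEquivRange_apply_mk p)
    rw [hf0def, LinearMap.comp_apply, LinearEquiv.coe_coe, ← h1,
      LinearEquiv.symm_apply_apply, Submodule.liftQ_apply]
  have hinner0 : ∀ v w : S, ⟪f0 v, f0 w⟫_B = ⟪(v : TL), (w : TL)⟫_B := by
    rintro ⟨v, hv⟩ ⟨w, hw⟩
    obtain ⟨p, rfl⟩ := LinearMap.mem_range.mp hv
    obtain ⟨q, rfl⟩ := LinearMap.mem_range.mp hw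
    rw [hf0 p, hf0 q, key2]
  have hnorm0 : ∀ v : S, ‖f0 v‖ = ‖v‖ := by
    intro v
    rw [CStarModuleRight.norm_eq_sqrt_norm_inner_self (A := B), hinner0]
    exact (CStarModuleRight.norm_eq_sqrt_norm_inner_self (A := B) (v : TL)).symm
  set F : S →L[ℂ] TR := LinearMap.mkContinuous f0 1
    (fun v => by rw [hnorm0, one_mul]) with hF
  set e0 : S →L[ℂ] TL := S.subtypeL with he0
  have hde : DenseRange e0 := by
    have : Set.range e0 = (S : Set TL) := Subtype.range_coe
    rw [DenseRange, this]
    exact hSdense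
  have hui : IsUniformInducing e0 := isometry_subtype_coe.isUniformInducing
  set α : TL →L[ℂ] TR := F.extend e0 with hα
  have hαe : ∀ v : S, α (v : TL) = f0 v := by
    intro v
    exact ContinuousLinearMap.extend_eq F hde hui v
  -- the formula on elementary tensors
  have hform : ∀ p : G, α (g p) = h p := by
    intro p
    have hmem : Lg (Finsupp.single p 1) ∈ S := LinearMap.mem_range_self _ _
    have hgp : g p = ((⟨Lg (Finsupp.single p 1), hmem⟩ : S) : TL) := by
      simp [hLg, Finsupp.linearCombination_single]
    rw [hgp, hαe, hf0]
    simp [hLh, Finsupp.linearCombination_single]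
  refine ⟨α, ?_, ?_, ?_, ?_, ?_⟩
  · intro x y z c e
    exact hform (x, y, c, z, e)
  · exact fun t t' => map_add α t t'
  · exact fun k t => map_smul α k t
  · -- compatibility with the right `B`-action
    intro t b
    have hc1 : Continuous fun t : TL => α (t <• b) :=
      α.continuous.comp (Stmt11Aux.opSMulCLM (E := TL) b).continuous
    have hc2 : Continuous fun t : TL => (α t) <• b :=
      (Stmt11Aux.opSMulCLM (E := TR) b).continuous.comp α.continuous
    have heq : (fun t : TL => α (t <• b)) = fun t : TL => (α t) <• b := by
      refine Continuous.ext_on hSdense hc1 hc2 ?_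
      intro v hv
      rw [hSspan] at hv
      induction hv using Submodule.span_induction with
      | mem u hu =>
        obtain ⟨⟨x, y, c, z, e⟩, rfl⟩ := hu
        show α ((g (x, y, c, z, e)) <• b) = (α (g (x, y, c, z, e))) <• b
        have : (g (x, y, c, z, e)) <• b = g (x, y, c, z, e * b) := by
          simp [hg, hιL_smul]
        rw [this, hform, hform, hh]
        simp only [hιR_smul, mul_assoc]
      | zero => simp [Stmt11Aux.op_smul_zero]
      | add u w _ _ hu hw =>
        dsimp only at hu hw ⊢
        rw [Stmt11Aux.op_smul_add, map_add, hu, hw, map_add, Stmt11Aux.op_smul_add]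
      | smul k u _ hu =>
        dsimp only at hu ⊢
        rw [Stmt11Aux.op_smul_csmul, map_smul, hu, map_smul, Stmt11Aux.op_smul_csmul]
    exact congrFun heq t
  · -- isometry
    intro t t'
    have hc1 : Continuous fun p : TL × TL => ⟪α p.1, α p.2⟫_B := by
      exact CStarModuleRight.continuous_inner.comp
        ((α.continuous.comp continuous_fst).prodMk (α.continuous.comp continuous_snd))
    have hc2 : Continuous fun p : TL × TL => ⟪p.1, p.2⟫_B := CStarModuleRight.continuous_inner
    have heq : (fun p : TL × TL => ⟪α p.1, α p.2⟫_B) = fun p : TL × TL => ⟪p.1, p.2⟫_B := by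
      refine Continuous.ext_on (hSdense.prod hSdense) hc1 hc2 ?_
      rintro ⟨v, w⟩ ⟨hv, hw⟩
      show ⟪α v, α w⟫_B = ⟪v, w⟫_B
      have := hinner0 ⟨v, hv⟩ ⟨w, hw⟩
      rw [hαe ⟨v, hv⟩, hαe ⟨w, hw⟩]
      exact this
    exact congrFun heq (t, t')
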